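/- Let b ≥ 2 be an integer with b ≡ 180 (mod 11184810) and let t be a positive integer with t ≡ 171 (mod 240). Then the b-repdigit 101·(b^t − 1)/(b − 1) is a Riesel number. -/
import Mathlib


/-- A number is composite if it is a product of two integers greater than 1. -/
def IsComposite (n : ℕ) : Prop := ∃ a b : ℕ, 1 < a ∧ 1 < b ∧ n = a * b

/-- A Riesel number is an odd positive integer `k` such that `k·2^n − 1` is composite
for every positive integer `n`. -/
def IsRiesel (k : ℕ) : Prop := 0 < k ∧ Odd k ∧ ∀ n : ℕ, 0 < n → IsComposite (k * 2 ^ n - 1)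

instance : Fact (Nat.Prime 5) := ⟨by norm_num⟩
instance : Fact (Nat.Prime 7) := ⟨by norm_num⟩
instance : Fact (Nat.Prime 13) := ⟨by norm_num⟩
instance : Fact (Nat.Prime 17) := ⟨by norm_num⟩
instance : Fact (Nat.Prime 241) := ⟨by norm_num⟩

/-- The value of the repunit-type number modulo a prime `p` dividing `11184810`
with `p - 1` dividing `240`. -/
lemma Kmod (b t : ℕ) (hb : 2 ≤ b) (hbm : b % 11184810 = 180) (htm : t % 240 = 171)
    (p : ℕ) [Fact p.Prime] (hdvd : (11184810 : ZMod p) = 0)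
    (k : ℕ) (hk : (p - 1) * k = 240)
    (c : ZMod p) (hne : ((180 : ZMod p) - 1) ≠ 0)
    (hc : c * ((180 : ZMod p) - 1) = 101 * ((180 : ZMod p) ^ 171 - 1)) :
    ((101 * ((b ^ t - 1) / (b - 1)) : ℕ) : ZMod p) = c := by
  have hb1 : 1 ≤ b := by omega
  have ht171 : 171 ≤ t := by have := Nat.mod_le t 240; omega
  have hdv : (b - 1) ∣ (b ^ t - 1) := by simpa using Nat.sub_dvd_pow_sub_pow b 1 t
  have hR : (b - 1) * ((b ^ t - 1) / (b - 1)) = b ^ t - 1 := Nat.mul_div_cancel' hdv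
  have hbp : ((b : ℕ) : ZMod p) = 180 := by
    have h := Nat.div_add_mod b 11184810
    have hb' : b = 11184810 * (b / 11184810) + 180 := by omega
    rw [hb']
    push_cast
    rw [hdvd]
    ring
  have hbt : ((b : ZMod p)) ^ t = (180 : ZMod p) ^ 171 := by
    have ht' : t = 240 * (t / 240) + 171 := by have := Nat.div_add_mod t 240; omega
    rw [hbp]
    by_cases h0 : (180 : ZMod p) = 0
    · rw [h0, zero_pow (by omega : t ≠ 0), zero_pow (by norm_num)]
    · have h240 : (180 : ZMod p) ^ 240 = 1 := by
        rw [← hk, pow_mul, ZMod.pow_card_sub_one_eq_one h0, one_pow]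
      conv_lhs => rw [ht']
      rw [pow_add, pow_mul, h240, one_pow, one_mul]
  have h1bt : 1 ≤ b ^ t := Nat.one_le_pow t b (by omega)
  have hcast : (((b : ZMod p)) - 1) * (((b ^ t - 1) / (b - 1) : ℕ) : ZMod p)
      = ((b : ZMod p)) ^ t - 1 := by
    have h := congrArg (Nat.cast : ℕ → ZMod p) hR
    rw [Nat.cast_mul, Nat.cast_sub hb1, Nat.cast_sub h1bt, Nat.cast_pow, Nat.cast_one] at h
    exact h
  rw [hbt, hbp] at hcast
  have hmain : ((101 * ((b ^ t - 1) / (b - 1)) : ℕ) : ZMod p) * ((180 : ZMod p) - 1)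
      = c * ((180 : ZMod p) - 1) := by
    rw [Nat.cast_mul, hc]
    have h101 : ((101 : ℕ) : ZMod p) = 101 := by push_cast; ring
    rw [h101, mul_assoc, mul_comm (((b ^ t - 1) / (b - 1) : ℕ) : ZMod p) ((180 : ZMod p) - 1),
      hcast]
  exact mul_right_cancel₀ hne hmain

/-- If `p` divides `K·2^n − 1` with the right congruences, the latter is composite. -/
lemma cover_helper (K n p : ℕ) (hp : 1 < p) (hp241 : p ≤ 241) (hK : 202 ≤ K) (hn : 0 < n)
    (c : ZMod p) (hKc : (K : ZMod p) = c) (h24 : (2 : ZMod p) ^ 24 = 1)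
    (hcr : c * 2 ^ (n % 24) = 1) : IsComposite (K * 2 ^ n - 1) := by
  haveI : NeZero p := ⟨by omega⟩
  have h2n : 2 ≤ 2 ^ n := by
    calc (2 : ℕ) = 2 ^ 1 := (pow_one 2).symm
    _ ≤ 2 ^ n := Nat.pow_le_pow_right (by norm_num) hn
  have hKn : 404 ≤ K * 2 ^ n := le_trans (by norm_num) (Nat.mul_le_mul hK h2n)
  have hdvd : p ∣ K * 2 ^ n - 1 := by
    have hz : ((K * 2 ^ n - 1 : ℕ) : ZMod p) = 0 := by
      have h1 : 1 ≤ K * 2 ^ n := by omega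
      rw [Nat.cast_sub h1, Nat.cast_mul, Nat.cast_pow, Nat.cast_one, Nat.cast_two, hKc]
      have h2 : (2 : ZMod p) ^ n = 2 ^ (n % 24) := by
        conv_lhs => rw [← Nat.div_add_mod n 24]
        rw [pow_add, pow_mul, h24, one_pow, one_mul]
      rw [h2, hcr, sub_self]
    exact (ZMod.natCast_eq_zero_iff _ p).mp hz
  obtain ⟨m, hm⟩ := hdvd
  have hm1 : 1 < m := by
    by_contra hle
    push_neg at hle
    have : p * m ≤ p * 1 := Nat.mul_le_mul le_rfl hle
    omega
  exact ⟨p, m, hp, hm1, hm⟩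

set_option maxRecDepth 40000 in
/-- Let `b ≥ 2` be an integer with `b ≡ 180 (mod 11184810)` and let `t`
be a positive integer with `t ≡ 171 (mod 240)`. Then the `b`-repdigit
`101·(b^t − 1)/(b − 1)` is a Riesel number. -/
theorem stmt_11 (b t : ℕ) (hb : 2 ≤ b) (hbmod : b ≡ 180 [MOD 11184810])
    (ht : 0 < t) (htmod : t ≡ 171 [MOD 240]) :
    IsRiesel (101 * ((b ^ t - 1) / (b - 1))) := by
  have hbm : b % 11184810 = 180 := by
    have h := hbmod; unfold Nat.ModEq at h; omega
  have htm : t % 240 = 171 := by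
    have h := htmod; unfold Nat.ModEq at h; omega
  have hb180 : 180 ≤ b := by have := Nat.mod_le b 11184810; omega
  have ht171 : 171 ≤ t := by have := Nat.mod_le t 240; omega
  set K : ℕ := 101 * ((b ^ t - 1) / (b - 1)) with hKdef
  -- lower bound on K
  have hKlb : 202 ≤ K := by
    have hdv : (b - 1) ∣ (b ^ t - 1) := by simpa using Nat.sub_dvd_pow_sub_pow b 1 t
    have hR : (b - 1) * ((b ^ t - 1) / (b - 1)) = b ^ t - 1 := Nat.mul_div_cancel' hdv
    have hbb : b ^ 2 = b * b := by ring
    have h2b : 2 * b ≤ b * b := Nat.mul_le_mul hb le_rfl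
    have hb2t : b ^ 2 ≤ b ^ t := Nat.pow_le_pow_right (by omega) (by omega)
    have hR2 : 2 ≤ (b ^ t - 1) / (b - 1) := by
      by_contra hle
      push_neg at hle
      have h1 : (b - 1) * ((b ^ t - 1) / (b - 1)) ≤ (b - 1) * 1 :=
        Nat.mul_le_mul le_rfl (by omega)
      omega
    calc (202 : ℕ) = 101 * 2 := by norm_num
    _ ≤ K := Nat.mul_le_mul le_rfl hR2
  -- residues of K modulo the covering primes
  have hK2 : (K : ZMod 2) = 1 :=
    Kmod b t hb hbm htm 2 (show (11184810 : ZMod 2) = 0 by decide) 240 (by norm_num) 1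
      (show ((180 : ZMod 2) - 1) ≠ 0 by decide)
      (show (1 : ZMod 2) * ((180 : ZMod 2) - 1) = 101 * ((180 : ZMod 2) ^ 171 - 1) by decide)
  have hK3 : (K : ZMod 3) = 2 :=
    Kmod b t hb hbm htm 3 (show (11184810 : ZMod 3) = 0 by decide) 120 (by norm_num) 2
      (show ((180 : ZMod 3) - 1) ≠ 0 by decide)
      (show (2 : ZMod 3) * ((180 : ZMod 3) - 1) = 101 * ((180 : ZMod 3) ^ 171 - 1) by decide)
  have hK5 : (K : ZMod 5) = 1 :=
    Kmod b t hb hbm htm 5 (show (11184810 : ZMod 5) = 0 by decide) 60 (by norm_num) 1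
      (show ((180 : ZMod 5) - 1) ≠ 0 by decide)
      (show (1 : ZMod 5) * ((180 : ZMod 5) - 1) = 101 * ((180 : ZMod 5) ^ 171 - 1) by decide)
  have hK7 : (K : ZMod 7) = 2 :=
    Kmod b t hb hbm htm 7 (show (11184810 : ZMod 7) = 0 by decide) 40 (by norm_num) 2
      (show ((180 : ZMod 7) - 1) ≠ 0 by decide)
      (show (2 : ZMod 7) * ((180 : ZMod 7) - 1) = 101 * ((180 : ZMod 7) ^ 171 - 1) by decide)
  have hK13 : (K : ZMod 13) = 4 :=
    Kmod b t hb hbm htm 13 (show (11184810 : ZMod 13) = 0 by decide) 20 (by norm_num) 4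
      (show ((180 : ZMod 13) - 1) ≠ 0 by decide)
      (show (4 : ZMod 13) * ((180 : ZMod 13) - 1) = 101 * ((180 : ZMod 13) ^ 171 - 1) by decide)
  have hK17 : (K : ZMod 17) = 13 :=
    Kmod b t hb hbm htm 17 (show (11184810 : ZMod 17) = 0 by decide) 15 (by norm_num) 13
      (show ((180 : ZMod 17) - 1) ≠ 0 by decide)
      (show (13 : ZMod 17) * ((180 : ZMod 17) - 1) = 101 * ((180 : ZMod 17) ^ 171 - 1) by decide)
  have hK241 : (K : ZMod 241) = 177 :=
    Kmod b t hb hbm htm 241 (show (11184810 : ZMod 241) = 0 by decide) 1 (by norm_num) 177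
      (show ((180 : ZMod 241) - 1) ≠ 0 by decide)
      (show (177 : ZMod 241) * ((180 : ZMod 241) - 1) = 101 * ((180 : ZMod 241) ^ 171 - 1) by decide)
  refine ⟨by omega, ?_, ?_⟩
  · -- K is odd
    have hnd : ¬ (2 ∣ K) := by
      intro hdv
      rw [(ZMod.natCast_eq_zero_iff K 2).mpr hdv] at hK2
      exact zero_ne_one hK2
    exact Nat.odd_iff.mpr (by omega)
  · intro n hn
    have h24 : n % 24 < 24 := Nat.mod_lt _ (by norm_num)
    have hcases : n % 24 = 0 ∨ n % 24 = 1 ∨ n % 24 = 2 ∨ n % 24 = 3 ∨ n % 24 = 4 ∨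
        n % 24 = 5 ∨ n % 24 = 6 ∨ n % 24 = 7 ∨ n % 24 = 8 ∨ n % 24 = 9 ∨ n % 24 = 10 ∨
        n % 24 = 11 ∨ n % 24 = 12 ∨ n % 24 = 13 ∨ n % 24 = 14 ∨ n % 24 = 15 ∨ n % 24 = 16 ∨
        n % 24 = 17 ∨ n % 24 = 18 ∨ n % 24 = 19 ∨ n % 24 = 20 ∨ n % 24 = 21 ∨ n % 24 = 22 ∨
        n % 24 = 23 := by omega
    rcases hcases with h|h|h|h|h|h|h|h|h|h|h|h|h|h|h|h|h|h|h|h|h|h|h|h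
    · exact cover_helper K n 5 (by norm_num) (by norm_num) hKlb hn 1 hK5
        (show (2 : ZMod 5) ^ 24 = 1 by decide)
        (show (1 : ZMod 5) * 2 ^ (n % 24) = 1 by rw [h]; decide)
    · exact cover_helper K n 3 (by norm_num) (by norm_num) hKlb hn 2 hK3
        (show (2 : ZMod 3) ^ 24 = 1 by decide)
        (show (2 : ZMod 3) * 2 ^ (n % 24) = 1 by rw [h]; decide)
    · exact cover_helper K n 7 (by norm_num) (by norm_num) hKlb hn 2 hK7
        (show (2 : ZMod 7) ^ 24 = 1 by decide)
        (show (2 : ZMod 7) * 2 ^ (n % 24) = 1 by rw [h]; decide)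
    · exact cover_helper K n 3 (by norm_num) (by norm_num) hKlb hn 2 hK3
        (show (2 : ZMod 3) ^ 24 = 1 by decide)
        (show (2 : ZMod 3) * 2 ^ (n % 24) = 1 by rw [h]; decide)
    · exact cover_helper K n 5 (by norm_num) (by norm_num) hKlb hn 1 hK5
        (show (2 : ZMod 5) ^ 24 = 1 by decide)
        (show (1 : ZMod 5) * 2 ^ (n % 24) = 1 by rw [h]; decide)
    · exact cover_helper K n 3 (by norm_num) (by norm_num) hKlb hn 2 hK3
        (show (2 : ZMod 3) ^ 24 = 1 by decide)
        (show (2 : ZMod 3) * 2 ^ (n % 24) = 1 by rw [h]; decide)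
    · exact cover_helper K n 241 (by norm_num) (by norm_num) hKlb hn 177 hK241
        (show (2 : ZMod 241) ^ 24 = 1 by decide)
        (show (177 : ZMod 241) * 2 ^ (n % 24) = 1 by rw [h]; decide)
    · exact cover_helper K n 3 (by norm_num) (by norm_num) hKlb hn 2 hK3
        (show (2 : ZMod 3) ^ 24 = 1 by decide)
        (show (2 : ZMod 3) * 2 ^ (n % 24) = 1 by rw [h]; decide)
    · exact cover_helper K n 5 (by norm_num) (by norm_num) hKlb hn 1 hK5
        (show (2 : ZMod 5) ^ 24 = 1 by decide)
        (show (1 : ZMod 5) * 2 ^ (n % 24) = 1 by rw [h]; decide)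
    · exact cover_helper K n 3 (by norm_num) (by norm_num) hKlb hn 2 hK3
        (show (2 : ZMod 3) ^ 24 = 1 by decide)
        (show (2 : ZMod 3) * 2 ^ (n % 24) = 1 by rw [h]; decide)
    · exact cover_helper K n 13 (by norm_num) (by norm_num) hKlb hn 4 hK13
        (show (2 : ZMod 13) ^ 24 = 1 by decide)
        (show (4 : ZMod 13) * 2 ^ (n % 24) = 1 by rw [h]; decide)
    · exact cover_helper K n 3 (by norm_num) (by norm_num) hKlb hn 2 hK3
        (show (2 : ZMod 3) ^ 24 = 1 by decide)
        (show (2 : ZMod 3) * 2 ^ (n % 24) = 1 by rw [h]; decide)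
    · exact cover_helper K n 5 (by norm_num) (by norm_num) hKlb hn 1 hK5
        (show (2 : ZMod 5) ^ 24 = 1 by decide)
        (show (1 : ZMod 5) * 2 ^ (n % 24) = 1 by rw [h]; decide)
    · exact cover_helper K n 3 (by norm_num) (by norm_num) hKlb hn 2 hK3
        (show (2 : ZMod 3) ^ 24 = 1 by decide)
        (show (2 : ZMod 3) * 2 ^ (n % 24) = 1 by rw [h]; decide)
    · exact cover_helper K n 7 (by norm_num) (by norm_num) hKlb hn 2 hK7
        (show (2 : ZMod 7) ^ 24 = 1 by decide)
        (show (2 : ZMod 7) * 2 ^ (n % 24) = 1 by rw [h]; decide)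
    · exact cover_helper K n 3 (by norm_num) (by norm_num) hKlb hn 2 hK3
        (show (2 : ZMod 3) ^ 24 = 1 by decide)
        (show (2 : ZMod 3) * 2 ^ (n % 24) = 1 by rw [h]; decide)
    · exact cover_helper K n 5 (by norm_num) (by norm_num) hKlb hn 1 hK5
        (show (2 : ZMod 5) ^ 24 = 1 by decide)
        (show (1 : ZMod 5) * 2 ^ (n % 24) = 1 by rw [h]; decide)
    · exact cover_helper K n 3 (by norm_num) (by norm_num) hKlb hn 2 hK3
        (show (2 : ZMod 3) ^ 24 = 1 by decide)
        (show (2 : ZMod 3) * 2 ^ (n % 24) = 1 by rw [h]; decide)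
    · exact cover_helper K n 17 (by norm_num) (by norm_num) hKlb hn 13 hK17
        (show (2 : ZMod 17) ^ 24 = 1 by decide)
        (show (13 : ZMod 17) * 2 ^ (n % 24) = 1 by rw [h]; decide)
    · exact cover_helper K n 3 (by norm_num) (by norm_num) hKlb hn 2 hK3
        (show (2 : ZMod 3) ^ 24 = 1 by decide)
        (show (2 : ZMod 3) * 2 ^ (n % 24) = 1 by rw [h]; decide)
    · exact cover_helper K n 5 (by norm_num) (by norm_num) hKlb hn 1 hK5
        (show (2 : ZMod 5) ^ 24 = 1 by decide)
        (show (1 : ZMod 5) * 2 ^ (n % 24) = 1 by rw [h]; decide)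
    · exact cover_helper K n 3 (by norm_num) (by norm_num) hKlb hn 2 hK3
        (show (2 : ZMod 3) ^ 24 = 1 by decide)
        (show (2 : ZMod 3) * 2 ^ (n % 24) = 1 by rw [h]; decide)
    · exact cover_helper K n 13 (by norm_num) (by norm_num) hKlb hn 4 hK13
        (show (2 : ZMod 13) ^ 24 = 1 by decide)
        (show (4 : ZMod 13) * 2 ^ (n % 24) = 1 by rw [h]; decide)
    · exact cover_helper K n 3 (by norm_num) (by norm_num) hKlb hn 2 hK3
        (show (2 : ZMod 3) ^ 24 = 1 by decide)
        (show (2 : ZMod 3) * 2 ^ (n % 24) = 1 by rw [h]; decide)
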